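/- Let a > 0 and b be real numbers and n ≥ 0 an integer. Then r̃_{n+1}(1) = (2a)_{n+1} ≠ 0, and r̃_{n+1} has exactly n+1 zeros, all of which are simple and lie on the unit circle {z ∈ ℂ : |z| = 1}. -/

import Mathlib

open Polynomial

/-- The Pochhammer symbol (rising factorial) `(x)_m = x(x+1)⋯(x+m-1)` in `ℂ`. -/
noncomputable def pochC (x : ℂ) (m : ℕ) : ℂ := (ascPochhammer ℂ m).eval x

/-- `r̃_j(z) := Σ_{k=0}^{j} (−1)^k · C(j,k) · (a+bi)_k · (2a+k)_{j−k} · (1−z)^k`,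
which equals `(2a)_j · ₂F₁(−j, a+bi; 2a; 1−z)`. -/
noncomputable def rpoly (a b : ℝ) (j : ℕ) : Polynomial ℂ :=
  ∑ k ∈ Finset.range (j + 1),
    Polynomial.C ((-1 : ℂ) ^ k * (j.choose k : ℂ) * pochC ((a : ℂ) + (b : ℂ) * Complex.I) k *
        pochC (2 * (a : ℂ) + (k : ℂ)) (j - k)) * (1 - Polynomial.X) ^ k

open Complex

section helpers

lemma pochC_zero (x : ℂ) : pochC x 0 = 1 := by simp [pochC]

lemma pochC_succ (x : ℂ) (m : ℕ) : pochC x (m+1) = pochC x m * (x + m) := by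
  simp [pochC, ascPochhammer_succ_right]

lemma pochC_succ_left (x : ℂ) (m : ℕ) : pochC x (m+1) = x * pochC (x+1) m := by
  simp only [pochC, ascPochhammer_succ_left]
  rw [X_mul, eval_mul_X, eval_comp]
  simp only [eval_add, eval_X, eval_one]
  ring

lemma pochC_ne_zero_of_re_pos {x : ℂ} (hx : 0 < x.re) (m : ℕ) : pochC x m ≠ 0 := by
  induction m with
  | zero => simp [pochC_zero]
  | succ k ih =>
    rw [pochC_succ]
    refine mul_ne_zero ih ?_
    intro h
    have h0 : (x + k).re = 0 := by rw [h]; simp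
    simp only [Complex.add_re, Complex.natCast_re] at h0
    have : 0 < x.re + (k:ℝ) := by positivity
    linarith

lemma conj_pochC (x : ℂ) (m : ℕ) :
    (starRingEnd ℂ) (pochC x m) = pochC ((starRingEnd ℂ) x) m := by
  induction m with
  | zero => simp [pochC_zero]
  | succ k ih => simp [pochC_succ, ih, map_mul, map_add]

lemma rpoly_eval_one (a b : ℝ) (j : ℕ) :
    (rpoly a b j).eval 1 = pochC (2 * (a:ℂ)) j := by
  rw [rpoly, eval_finset_sum]
  rw [Finset.sum_eq_single 0]
  · simp [pochC]
  · intro k hk hk0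
    simp [eval_mul, eval_pow, zero_pow hk0]
  · intro h; simp at h

lemma coeff_sum_C_mul_X_pow (j : ℕ) (e : ℕ → ℂ) (he : ∀ k, j < k → e k = 0) (t : ℕ) :
    (∑ k ∈ Finset.range (j+1), C (e k) * X^k).coeff t = e t := by
  rw [finset_sum_coeff]
  simp only [coeff_C_mul, coeff_X_pow]
  rw [Finset.sum_eq_single t]
  · simp
  · intro k _ hkt; simp [Ne.symm hkt]
  · intro ht; simp at ht; exact (by simp [he t (by omega)])

lemma sum_rec (j : ℕ) (e f : ℕ → ℂ) (A B ε : ℂ)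
    (he : ∀ k, j < k → e k = 0)
    (h0 : f 0 = A * e 0)
    (hk : ∀ k, f (k+1) = (A - ε*(k+1)) * e (k+1) + (B + ε*k) * e k) :
    ∑ k ∈ Finset.range (j+2), C (f k) * X^k
      = (C A + C B * X) * (∑ k ∈ Finset.range (j+1), C (e k) * X^k)
        + C ε * (X^2 - X) * derivative (∑ k ∈ Finset.range (j+1), C (e k) * X^k) := by
  have hf : ∀ k, j + 1 < k → f k = 0 := by
    intro k hkk
    match k, hkk with
    | (k+1), hkk =>
      rw [hk k, he (k+1) (by omega), he k (by omega)]; ring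
  set P : Polynomial ℂ := ∑ k ∈ Finset.range (j+1), C (e k) * X^k with hP
  have hcoeff : ∀ t, P.coeff t = e t := coeff_sum_C_mul_X_pow j e he
  have hR : (C A + C B * X) * P + C ε * (X^2 - X) * derivative P
      = C A * P + (C B * P) * X^1 + (C ε * derivative P) * X^2 - (C ε * derivative P) * X^1 := by
    ring
  rw [hR]
  ext t
  rw [coeff_sum_C_mul_X_pow (j+1) f hf t]
  simp only [coeff_sub, coeff_add, coeff_mul_X_pow', coeff_C_mul, coeff_derivative, hcoeff]
  match t with
  | 0 => simpa using h0
  | 1 => rw [hk 0]; push_cast; simp; ring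
  | (t+2) =>
    rw [hk (t+1)]
    have h1 : (2:ℕ) ≤ t + 2 := by omega
    have h2 : (1:ℕ) ≤ t + 2 := by omega
    simp only [if_pos h1, if_pos h2]
    have e1 : t + 2 - 1 = t + 1 := by omega
    rw [e1]
    have e2 : t + 2 - 2 = t := by omega
    rw [e2]
    push_cast; ring

end helpers

section coefs

noncomputable def qcoef (a b : ℝ) (j k : ℕ) : ℂ :=
  (j.choose k : ℂ) * pochC ((a:ℂ) + b*I) k * pochC ((a:ℂ) - b*I) (j-k)

noncomputable def wcoef (a b : ℝ) (j k : ℕ) : ℂ :=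
  (-1:ℂ)^k * (j.choose k : ℂ) * pochC ((a:ℂ) + b*I) k * pochC (2*(a:ℂ) + k) (j-k)

lemma qcoef_top (a b : ℝ) (j k : ℕ) (h : j < k) : qcoef a b j k = 0 := by
  simp [qcoef, Nat.choose_eq_zero_of_lt h]

lemma wcoef_top (a b : ℝ) (j k : ℕ) (h : j < k) : wcoef a b j k = 0 := by
  simp [wcoef, Nat.choose_eq_zero_of_lt h]

lemma qcoef_rec0 (a b : ℝ) (j : ℕ) :
    qcoef a b (j+1) 0 = ((a:ℂ) - b*I + j) * qcoef a b j 0 := by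
  simp only [qcoef, Nat.choose_zero_right, Nat.cast_one, Nat.sub_zero, pochC_succ]
  ring

lemma qcoef_rec (a b : ℝ) (j k : ℕ) :
    qcoef a b (j+1) (k+1) = (((a:ℂ) - b*I + j) - 1*(k+1)) * qcoef a b j (k+1)
      + (((a:ℂ) + b*I) + 1*k) * qcoef a b j k := by
  rcases lt_trichotomy j k with h | rfl | h
  · rw [qcoef_top a b j (k+1) (by omega), qcoef_top a b j k (by omega),
      qcoef_top a b (j+1) (k+1) (by omega)]
    ring
  · rw [qcoef_top a b j (j+1) (by omega)]
    simp only [qcoef, Nat.choose_self, Nat.sub_self, Nat.cast_one, pochC_zero,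
      Nat.succ_sub_one, pochC_succ]
    ring
  · obtain ⟨s, rfl⟩ : ∃ s, j = k + 1 + s := ⟨j - (k+1), by omega⟩
    have e1 : k + 1 + s - (k + 1) = s := by omega
    have e2 : k + 1 + s - k = s + 1 := by omega
    have e3 : k + 1 + s + 1 - (k + 1) = s + 1 := by omega
    simp only [qcoef, e1, e2, e3, Nat.choose_succ_succ (k+1+s) k, pochC_succ]
    push_cast
    ring

lemma wcoef_rec0 (a b : ℝ) (j : ℕ) :
    wcoef a b (j+1) 0 = (2*(a:ℂ) + j) * wcoef a b j 0 := by
  simp only [wcoef, Nat.choose_zero_right, Nat.cast_one, Nat.sub_zero, Nat.cast_zero,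
    add_zero, pochC_succ]
  ring

lemma wcoef_rec (a b : ℝ) (j k : ℕ) :
    wcoef a b (j+1) (k+1) = ((2*(a:ℂ) + j) - (-1)*(k+1)) * wcoef a b j (k+1)
      + ((-((a:ℂ) + b*I)) + (-1)*k) * wcoef a b j k := by
  rcases lt_trichotomy j k with h | rfl | h
  · rw [wcoef_top a b j (k+1) (by omega), wcoef_top a b j k (by omega),
      wcoef_top a b (j+1) (k+1) (by omega)]
    ring
  · rw [wcoef_top a b j (j+1) (by omega)]
    simp only [wcoef, Nat.choose_self, Nat.sub_self, Nat.cast_one, pochC_zero,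
      Nat.succ_sub_one, pochC_succ]
    push_cast
    ring
  · obtain ⟨s, rfl⟩ : ∃ s, j = k + 1 + s := ⟨j - (k+1), by omega⟩
    have e1 : k + 1 + s - (k + 1) = s := by omega
    have e2 : k + 1 + s - k = s + 1 := by omega
    have e3 : k + 1 + s + 1 - (k + 1) = s + 1 := by omega
    have hcc : ((k+1+s).choose (k+1) : ℂ) * (k+1) = ((k+1+s).choose k : ℂ) * (s+1) := by
      have hnat := Nat.choose_succ_right_eq (k+1+s) k
      rw [e2] at hnat
      exact_mod_cast congrArg (Nat.cast : ℕ → ℂ) hnat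
    simp only [wcoef, e1, e2, e3, Nat.choose_succ_succ (k+1+s) k]
    push_cast
    rw [show pochC (2*(a:ℂ) + ((k:ℂ)+1)) (s+1) = pochC (2*(a:ℂ) + ((k:ℂ)+1)) s * (2*(a:ℂ)+k+1+s) by
        rw [pochC_succ]; push_cast; ring_nf,
      show pochC (2*(a:ℂ) + (k:ℂ)) (s+1) = (2*(a:ℂ)+k) * pochC (2*(a:ℂ) + ((k:ℂ)+1)) s by
        rw [pochC_succ_left]; ring_nf,
      show pochC ((a:ℂ) + b*I) (k+1) = pochC ((a:ℂ) + b*I) k * ((a:ℂ)+b*I+k) by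
        rw [pochC_succ]]
    push_cast at hcc
    linear_combination ((-1:ℂ))^k * pochC ((a:ℂ) + b*I) k * ((a:ℂ)+b*I+k) *
      pochC (2*(a:ℂ) + ((k:ℂ)+1)) s * hcc

end coefs

section polys

noncomputable def qpoly (a b : ℝ) (j : ℕ) : Polynomial ℂ :=
  ∑ k ∈ Finset.range (j+1), C (qcoef a b j k) * X^k

noncomputable def wpoly (a b : ℝ) (j : ℕ) : Polynomial ℂ :=
  ∑ k ∈ Finset.range (j+1), C (wcoef a b j k) * X^k

lemma qpoly_rec (a b : ℝ) (j : ℕ) :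
    qpoly a b (j+1) = (C ((a:ℂ) - b*I + j) + C ((a:ℂ) + b*I) * X) * qpoly a b j
      + (X^2 - X) * derivative (qpoly a b j) := by
  have h := sum_rec j (qcoef a b j) (qcoef a b (j+1)) ((a:ℂ) - b*I + j) ((a:ℂ) + b*I) 1
    (fun k hk => qcoef_top a b j k hk) (qcoef_rec0 a b j) (fun k => qcoef_rec a b j k)
  simpa [qpoly] using h

lemma wpoly_rec (a b : ℝ) (j : ℕ) :
    wpoly a b (j+1) = (C (2*(a:ℂ) + j) + C (-((a:ℂ) + b*I)) * X) * wpoly a b j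
      + C (-1) * (X^2 - X) * derivative (wpoly a b j) := by
  have h := sum_rec j (wcoef a b j) (wcoef a b (j+1)) (2*(a:ℂ) + j) (-((a:ℂ) + b*I)) (-1)
    (fun k hk => wcoef_top a b j k hk) (wcoef_rec0 a b j) (fun k => wcoef_rec a b j k)
  simpa [wpoly] using h

lemma rpoly_eq_comp (a b : ℝ) (j : ℕ) :
    rpoly a b j = (wpoly a b j).comp (1 - X) := by
  rw [rpoly, wpoly, Polynomial.comp, eval₂_finset_sum]
  refine Finset.sum_congr rfl fun k _ => ?_
  rw [eval₂_mul, eval₂_C, eval₂_X_pow, wcoef]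

lemma rpoly_rec (a b : ℝ) (j : ℕ) :
    rpoly a b (j+1) = (C ((a:ℂ) - b*I + j) + C ((a:ℂ) + b*I) * X) * rpoly a b j
      + (X^2 - X) * derivative (rpoly a b j) := by
  have hd : derivative (rpoly a b j) = - (derivative (wpoly a b j)).comp (1 - X) := by
    rw [rpoly_eq_comp, derivative_comp]
    simp [derivative_one]
  rw [rpoly_eq_comp, wpoly_rec]
  simp only [add_comp, mul_comp, sub_comp, pow_comp, C_comp, X_comp, one_comp]
  rw [show (derivative (wpoly a b j)).comp (1 - X) = - derivative (rpoly a b j) by rw [hd]; ring,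
    ← rpoly_eq_comp]
  simp only [map_add, map_sub, map_neg, map_mul, map_one, map_ofNat]
  ring

lemma rpoly_eq_qpoly (a b : ℝ) (j : ℕ) : rpoly a b j = qpoly a b j := by
  induction j with
  | zero => simp [rpoly, qpoly, qcoef, pochC]
  | succ j ih => rw [rpoly_rec, qpoly_rec, ih]

lemma qpoly_coeff (a b : ℝ) (j t : ℕ) : (qpoly a b j).coeff t = qcoef a b j t :=
  coeff_sum_C_mul_X_pow j _ (fun k hk => qcoef_top a b j k hk) t

lemma qcoef_diag (a b : ℝ) (j : ℕ) : qcoef a b j j = pochC ((a:ℂ) + b*I) j := by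
  simp [qcoef, pochC_zero]

lemma qcoef_diag_ne (a b : ℝ) (ha : 0 < a) (j : ℕ) : qcoef a b j j ≠ 0 := by
  rw [qcoef_diag]
  exact pochC_ne_zero_of_re_pos (by simp [ha]) j

lemma natDegree_qpoly (a b : ℝ) (ha : 0 < a) (j : ℕ) : (qpoly a b j).natDegree = j := by
  refine le_antisymm ?_ ?_
  · exact natDegree_le_iff_coeff_eq_zero.mpr fun m hm => by
      rw [qpoly_coeff]; exact qcoef_top a b j m hm
  · exact le_natDegree_of_ne_zero (by rw [qpoly_coeff]; exact qcoef_diag_ne a b ha j)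

lemma leadingCoeff_qpoly (a b : ℝ) (ha : 0 < a) (j : ℕ) :
    (qpoly a b j).leadingCoeff = qcoef a b j j := by
  unfold Polynomial.leadingCoeff
  rw [natDegree_qpoly a b ha j, qpoly_coeff]

lemma qpoly_eval_one (a b : ℝ) (j : ℕ) : (qpoly a b j).eval 1 = pochC (2 * (a:ℂ)) j := by
  rw [← rpoly_eq_qpoly]; exact rpoly_eval_one a b j

end polys

section analytic

noncomputable def Ff (a b : ℝ) (j : ℕ) (θ : ℝ) : ℂ :=
  Complex.exp (-(j:ℂ) * θ * I / 2) * (qpoly a b j).eval (Complex.exp (θ * I))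

noncomputable def Df (a b : ℝ) (j : ℕ) (θ : ℝ) : ℂ :=
  Complex.exp (-(j:ℂ) * θ * I / 2) *
    ((-(j:ℂ) * I / 2) * (qpoly a b j).eval (Complex.exp (θ * I))
      + I * Complex.exp (θ * I) * (derivative (qpoly a b j)).eval (Complex.exp (θ * I)))

noncomputable def gf (a b : ℝ) (j : ℕ) (θ : ℝ) : ℝ := (Ff a b j θ).re
noncomputable def df (a b : ℝ) (j : ℕ) (θ : ℝ) : ℝ := (Df a b j θ).re

lemma hasDerivAt_Ff (a b : ℝ) (j : ℕ) (θ : ℝ) : HasDerivAt (Ff a b j) (Df a b j θ) θ := by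
  have hid : HasDerivAt (fun t : ℝ => (t:ℂ)) 1 θ := Complex.ofRealCLM.hasDerivAt
  have h1 : HasDerivAt (fun t : ℝ => -(j:ℂ) * (t:ℂ) * I / 2) (-(j:ℂ) * I / 2) θ := by
    have := ((hid.const_mul (-(j:ℂ))).mul_const I).div_const 2
    exact this.congr_deriv (by ring)
  have hexp1 : HasDerivAt (fun t : ℝ => Complex.exp (-(j:ℂ) * (t:ℂ) * I / 2))
      (Complex.exp (-(j:ℂ) * (θ:ℂ) * I / 2) * (-(j:ℂ) * I / 2)) θ := h1.cexp
  have h2 : HasDerivAt (fun t : ℝ => (t:ℂ) * I) I θ := by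
    have := hid.mul_const I
    exact this.congr_deriv (by ring)
  have hexp2 : HasDerivAt (fun t : ℝ => Complex.exp ((t:ℂ) * I))
      (Complex.exp ((θ:ℂ) * I) * I) θ := h2.cexp
  have h3 : HasDerivAt (fun t : ℝ => (qpoly a b j).eval (Complex.exp ((t:ℂ) * I)))
      ((derivative (qpoly a b j)).eval (Complex.exp ((θ:ℂ) * I)) * (Complex.exp ((θ:ℂ) * I) * I))
      θ := (Polynomial.hasDerivAt (qpoly a b j) _).comp θ hexp2
  have h4 := hexp1.mul h3
  refine h4.congr_deriv ?_
  unfold Df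
  ring

lemma conj_qcoef (a b : ℝ) (j k : ℕ) (hk : k ≤ j) :
    (starRingEnd ℂ) (qcoef a b j k) = qcoef a b j (j - k) := by
  simp only [qcoef, map_mul, conj_pochC, map_add, map_sub, Complex.conj_ofReal, conj_I,
    map_natCast]
  rw [Nat.choose_symm hk, Nat.sub_sub_self hk]
  ring

lemma exp_theta_mul_inv (θ : ℝ) : Complex.exp (-(θ:ℂ) * I) * Complex.exp ((θ:ℂ) * I) = 1 := by
  rw [← Complex.exp_add]; simp

lemma conj_eval_qpoly (a b : ℝ) (j : ℕ) (θ : ℝ) :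
    (starRingEnd ℂ) ((qpoly a b j).eval (Complex.exp ((θ:ℂ) * I)))
      = Complex.exp (-(j:ℂ) * θ * I) * (qpoly a b j).eval (Complex.exp ((θ:ℂ) * I)) := by
  have hinv := exp_theta_mul_inv θ
  have hconj : (starRingEnd ℂ) (Complex.exp ((θ:ℂ) * I)) = Complex.exp (-(θ:ℂ) * I) := by
    rw [← Complex.exp_conj]; congr 1; simp
  rw [qpoly, eval_finset_sum]
  simp only [eval_mul, eval_C, eval_pow, eval_X, map_sum, map_mul, map_pow, hconj]
  rw [Finset.mul_sum]
  rw [← Finset.sum_range_reflect]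
  refine Finset.sum_congr rfl fun k hk => ?_
  rw [Finset.mem_range] at hk
  have hk' : k ≤ j := by omega
  rw [show j + 1 - 1 - k = j - k by omega, conj_qcoef a b j (j-k) (by omega),
    Nat.sub_sub_self hk']
  have hpow : Complex.exp (-(θ:ℂ) * I) ^ (j - k)
      = Complex.exp (-(j:ℂ) * θ * I) * Complex.exp ((θ:ℂ) * I) ^ k := by
    have h1 : Complex.exp (-(θ:ℂ) * I) ^ (j - k) * Complex.exp (-(θ:ℂ)*I) ^ k
        = Complex.exp (-(j:ℂ) * θ * I) := by
      rw [← pow_add, show j - k + k = j by omega, ← Complex.exp_nat_mul]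
      congr 1; push_cast; ring
    calc Complex.exp (-(θ:ℂ) * I) ^ (j - k)
        = Complex.exp (-(θ:ℂ) * I) ^ (j-k) * ((Complex.exp (-(θ:ℂ)*I) * Complex.exp ((θ:ℂ)*I))^k) := by
          rw [hinv]; ring
      _ = (Complex.exp (-(θ:ℂ) * I) ^ (j-k) * Complex.exp (-(θ:ℂ)*I) ^ k) * Complex.exp ((θ:ℂ)*I) ^ k := by
          rw [mul_pow]; ring
      _ = Complex.exp (-(j:ℂ) * θ * I) * Complex.exp ((θ:ℂ) * I) ^ k := by rw [h1]
  rw [hpow]; ring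

lemma Ff_real (a b : ℝ) (j : ℕ) (θ : ℝ) : Ff a b j θ = ((gf a b j θ : ℝ) : ℂ) := by
  have hconj : (starRingEnd ℂ) (Ff a b j θ) = Ff a b j θ := by
    unfold Ff
    rw [map_mul, conj_eval_qpoly]
    rw [← Complex.exp_conj]
    rw [show (starRingEnd ℂ) (-(j:ℂ) * θ * I / 2) = (j:ℂ) * θ * I / 2 by
      simp only [map_div₀, map_mul, map_neg, Complex.conj_ofReal, conj_I, map_natCast, map_ofNat]
      ring]
    rw [show Complex.exp ((j:ℂ)*θ*I/2) * (Complex.exp (-(j:ℂ)*θ*I) * (qpoly a b j).eval (Complex.exp ((θ:ℂ)*I)))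
        = (Complex.exp ((j:ℂ)*θ*I/2) * Complex.exp (-(j:ℂ)*θ*I)) * (qpoly a b j).eval (Complex.exp ((θ:ℂ)*I)) by ring]
    rw [← Complex.exp_add]
    congr 2
    ring
  have him : (Ff a b j θ).im = 0 := Complex.conj_eq_iff_im.mp hconj
  exact Complex.ext rfl (by simp [him])

lemma Df_real (a b : ℝ) (j : ℕ) (θ : ℝ) : Df a b j θ = ((df a b j θ : ℝ) : ℂ) := by
  have him : (Df a b j θ).im = 0 := by
    have h1 : HasDerivAt (fun t => (Ff a b j t).im) (Df a b j θ).im θ :=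
      Complex.imCLM.hasFDerivAt.comp_hasDerivAt θ (hasDerivAt_Ff a b j θ)
    have h2 : (fun t => (Ff a b j t).im) = fun _ => (0:ℝ) := by
      funext t
      rw [Ff_real]; simp
    rw [h2] at h1
    exact h1.unique (hasDerivAt_const θ 0)
  exact Complex.ext rfl (by simp [him])

lemma hasDerivAt_gf (a b : ℝ) (j : ℕ) (θ : ℝ) : HasDerivAt (gf a b j) (df a b j θ) θ :=
  Complex.reCLM.hasFDerivAt.comp_hasDerivAt θ (hasDerivAt_Ff a b j θ)

lemma continuous_gf (a b : ℝ) (j : ℕ) : Continuous (gf a b j) :=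
  continuous_iff_continuousAt.mpr fun θ => (hasDerivAt_gf a b j θ).continuousAt

lemma cos_mul_E (θ : ℝ) :
    ((Real.cos (θ/2) : ℝ) : ℂ) * Complex.exp ((θ:ℂ)*I/2)
      = (Complex.exp ((θ:ℂ)*I) + 1) / 2 := by
  rw [Complex.ofReal_cos, Complex.cos]
  push_cast
  have h1 : Complex.exp ((θ:ℂ)/2*I) = Complex.exp ((θ:ℂ)*I/2) := by congr 1; ring
  have h2 : Complex.exp (-((θ:ℂ)/2)*I) * Complex.exp ((θ:ℂ)*I/2) = 1 := by
    rw [← Complex.exp_add, show -((θ:ℂ)/2)*I + (θ:ℂ)*I/2 = 0 by ring, Complex.exp_zero]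
  have h3 : Complex.exp ((θ:ℂ)*I/2) * Complex.exp ((θ:ℂ)*I/2) = Complex.exp ((θ:ℂ)*I) := by
    rw [← Complex.exp_add]; congr 1; ring
  rw [h1]
  linear_combination (1/2) * h3 + (1/2) * h2

lemma sin_mul_E (θ : ℝ) :
    ((Real.sin (θ/2) : ℝ) : ℂ) * Complex.exp ((θ:ℂ)*I/2)
      = -I * (Complex.exp ((θ:ℂ)*I) - 1) / 2 := by
  rw [Complex.ofReal_sin, Complex.sin]
  push_cast
  have h1 : Complex.exp ((θ:ℂ)/2*I) = Complex.exp ((θ:ℂ)*I/2) := by congr 1; ring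
  have h2 : Complex.exp (-((θ:ℂ)/2)*I) * Complex.exp ((θ:ℂ)*I/2) = 1 := by
    rw [← Complex.exp_add, show -((θ:ℂ)/2)*I + (θ:ℂ)*I/2 = 0 by ring, Complex.exp_zero]
  have h3 : Complex.exp ((θ:ℂ)*I/2) * Complex.exp ((θ:ℂ)*I/2) = Complex.exp ((θ:ℂ)*I) := by
    rw [← Complex.exp_add]; congr 1; ring
  rw [h1]
  linear_combination (I/2) * h2 - (I/2) * h3

lemma Ff_rec (a b : ℝ) (j : ℕ) (θ : ℝ) :
    Ff a b (j+1) θ = ((2*(a:ℂ)+j) * ((Real.cos (θ/2) : ℝ):ℂ) - 2*(b:ℂ) * ((Real.sin (θ/2):ℝ):ℂ)) * Ff a b j θ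
      + 2 * ((Real.sin (θ/2):ℝ):ℂ) * Df a b j θ := by
  set c : ℂ := ((Real.cos (θ/2) : ℝ):ℂ) with hc
  set s : ℂ := ((Real.sin (θ/2) : ℝ):ℂ) with hs
  set E : ℂ := Complex.exp ((θ:ℂ)*I/2) with hE
  set z : ℂ := Complex.exp ((θ:ℂ)*I) with hz
  set P : ℂ := (qpoly a b j).eval (Complex.exp ((θ:ℂ)*I)) with hP
  set P' : ℂ := (derivative (qpoly a b j)).eval (Complex.exp ((θ:ℂ)*I)) with hP'
  have hev : (qpoly a b (j+1)).eval (Complex.exp ((θ:ℂ)*I))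
      = (((a:ℂ) - b*I + j) + ((a:ℂ) + b*I) * z) * P + (z^2 - z) * P' := by
    rw [qpoly_rec]
    simp only [eval_add, eval_mul, eval_C, eval_X, eval_pow, eval_sub, derivative_add,
      eval_smul]
    rfl
  have hcos := cos_mul_E θ
  have hsin := sin_mul_E θ
  rw [← hc, ← hE, ← hz] at hcos
  rw [← hs, ← hE, ← hz] at hsin
  have h3 : E * E = z := by
    rw [hE, hz, ← Complex.exp_add]; congr 1; ring
  have key : (((a:ℂ) - b*I + j) + ((a:ℂ) + b*I) * z) * P + (z^2 - z) * P'
      = E * (((2*(a:ℂ)+j) * c - 2*(b:ℂ) * s) * P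
          + 2 * s * ((-(j:ℂ) * I / 2) * P + I * z * P')) := by
    linear_combination (-(2*(a:ℂ)+j)*P) * hcos + (2*(b:ℂ)*P + (j:ℂ)*I*P - 2*I*z*P') * hsin
      + ((z-1)*(z*P' - (j:ℂ)*P/2)) * Complex.I_sq
  have hMne : E * Complex.exp ((j:ℂ)*θ*I/2) ≠ 0 :=
    mul_ne_zero (Complex.exp_ne_zero _) (Complex.exp_ne_zero _)
  apply mul_left_cancel₀ hMne
  unfold Ff Df
  set K : ℂ := Complex.exp ((j:ℂ)*θ*I/2) with hK
  set Km : ℂ := Complex.exp (-(j:ℂ)*θ*I/2) with hKm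
  set L : ℂ := Complex.exp (-((j:ℕ)+1:ℂ)*θ*I/2) with hL
  have c1 : E * K * L = 1 := by
    rw [hE, hK, hL, ← Complex.exp_add, ← Complex.exp_add,
      show (θ:ℂ)*I/2 + (j:ℂ)*θ*I/2 + (-((j:ℕ)+1:ℂ) * θ * I / 2) = 0 by push_cast; ring]
    exact Complex.exp_zero
  have c2 : K * Km = 1 := by
    rw [hK, hKm, ← Complex.exp_add, show (j:ℂ)*θ*I/2 + (-(j:ℂ) * θ * I / 2) = 0 by ring]
    exact Complex.exp_zero
  push_cast
  rw [hev]
  linear_combination ((((a:ℂ) - b*I + j) + ((a:ℂ) + b*I) * z) * P + (z^2 - z) * P') * c1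
    + key
    - (E * (((2*(a:ℂ)+j) * c - 2*(b:ℂ) * s) * P + 2 * s * ((-(j:ℂ) * I / 2) * P + I * z * P'))) * c2

lemma gf_rec (a b : ℝ) (j : ℕ) (θ : ℝ) :
    gf a b (j+1) θ = ((2*a+j) * Real.cos (θ/2) - 2*b * Real.sin (θ/2)) * gf a b j θ
      + 2 * Real.sin (θ/2) * df a b j θ := by
  have h := Ff_rec a b j θ
  rw [Ff_real, Ff_real, Df_real] at h
  have h2 : (((gf a b (j+1) θ : ℝ)) : ℂ)
      = ((((2*a+j) * Real.cos (θ/2) - 2*b * Real.sin (θ/2)) * gf a b j θ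
          + 2 * Real.sin (θ/2) * df a b j θ : ℝ) : ℂ) := by
    rw [h]; push_cast; ring
  exact_mod_cast h2

lemma pochC_real (a : ℝ) (j : ℕ) :
    pochC (2*(a:ℂ)) j = (((ascPochhammer ℝ j).eval (2*a) : ℝ) : ℂ) := by
  unfold pochC
  rw [show (2*(a:ℂ)) = ((2*a : ℝ) : ℂ) by push_cast; ring]
  rw [← ascPochhammer_map (Complex.ofRealHom) j, Polynomial.eval_map]
  simpa using Polynomial.eval₂_at_apply (Complex.ofRealHom) (2*a) (p := ascPochhammer ℝ j)

lemma gf_zero_val (a b : ℝ) (j : ℕ) : gf a b j 0 = (ascPochhammer ℝ j).eval (2*a) := by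
  have h : Ff a b j 0 = pochC (2*(a:ℂ)) j := by
    unfold Ff
    simp only [Complex.ofReal_zero, mul_zero, zero_mul, zero_div, Complex.exp_zero, one_mul]
    exact qpoly_eval_one a b j
  unfold gf
  rw [h, pochC_real]
  simp

lemma gf_two_pi_val (a b : ℝ) (j : ℕ) :
    gf a b j (2*Real.pi) = (-1)^j * (ascPochhammer ℝ j).eval (2*a) := by
  have h1 : Complex.exp (((2*Real.pi : ℝ):ℂ) * I) = 1 := by
    push_cast
    rw [show (2*(Real.pi:ℂ)) * I = 2*Real.pi*I by ring]
    exact Complex.exp_two_pi_mul_I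
  have h2 : Complex.exp (-(j:ℂ) * ((2*Real.pi : ℝ):ℂ) * I / 2) = (-1)^j := by
    push_cast
    rw [show -(j:ℂ) * (2*(Real.pi:ℂ)) * I / 2 = (j:ℂ) * -(Real.pi*I) by ring,
      Complex.exp_nat_mul, Complex.exp_neg, Complex.exp_pi_mul_I]
    rw [inv_neg, inv_one]
  have h3 : Ff a b j (2*Real.pi) = (-1)^j * pochC (2*(a:ℂ)) j := by
    unfold Ff
    rw [h1, h2, qpoly_eval_one a b j]
  unfold gf
  rw [h3, pochC_real]
  have h4 : ((-1:ℂ))^j * (((ascPochhammer ℝ j).eval (2*a) : ℝ):ℂ)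
      = (((-1:ℝ)^j * (ascPochhammer ℝ j).eval (2*a) : ℝ) : ℂ) := by push_cast; ring
  rw [h4, Complex.ofReal_re]

lemma gf_eq_zero_iff (a b : ℝ) (j : ℕ) (θ : ℝ) :
    gf a b j θ = 0 ↔ (qpoly a b j).eval (Complex.exp ((θ:ℝ) * I)) = 0 := by
  constructor
  · intro h
    have hF : Ff a b j θ = 0 := by rw [Ff_real, h]; simp
    unfold Ff at hF
    rcases mul_eq_zero.mp hF with h' | h'
    · exact absurd h' (Complex.exp_ne_zero _)
    · exact h'
  · intro h
    have hF : Ff a b j θ = 0 := by unfold Ff; rw [h, mul_zero]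
    have h2 := Ff_real a b j θ
    rw [hF] at h2
    exact_mod_cast h2.symm

lemma df_at_root (a b : ℝ) (j : ℕ) (θ : ℝ)
    (h : (qpoly a b j).eval (Complex.exp ((θ:ℝ) * I)) = 0) :
    df a b j θ = 0 ↔ (derivative (qpoly a b j)).eval (Complex.exp ((θ:ℝ) * I)) = 0 := by
  have hD : Df a b j θ = Complex.exp (-(j:ℂ) * θ * I / 2) *
      (I * Complex.exp ((θ:ℝ) * I) * (derivative (qpoly a b j)).eval (Complex.exp ((θ:ℝ) * I))) := by
    unfold Df
    rw [h]
    ring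
  constructor
  · intro hd
    have h0 : Df a b j θ = 0 := by rw [Df_real, hd]; simp
    rw [hD] at h0
    rcases mul_eq_zero.mp h0 with h' | h'
    · exact absurd h' (Complex.exp_ne_zero _)
    · rcases mul_eq_zero.mp h' with h'' | h''
      · rcases mul_eq_zero.mp h'' with h3 | h3
        · exact absurd h3 Complex.I_ne_zero
        · exact absurd h3 (Complex.exp_ne_zero _)
      · exact h''
  · intro hd
    have h0 : Df a b j θ = 0 := by rw [hD, hd]; ring
    rw [Df_real] at h0
    exact_mod_cast h0

end analytic

section realhelpers
open Set

lemma sign_const {g : ℝ → ℝ} (hg : Continuous g) {c d : ℝ} (hcd : c ≤ d)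
    (hno : ∀ t ∈ Set.Icc c d, g t ≠ 0) (hc : 0 < g c) : 0 < g d := by
  by_contra hd
  push_neg at hd
  have hd' : g d < 0 := lt_of_le_of_ne hd (hno d (by constructor <;> simp [hcd, le_refl]))
  have h0 : (0:ℝ) ∈ Set.Icc (g d) (g c) := ⟨le_of_lt hd', le_of_lt hc⟩
  obtain ⟨t, ht, hgt⟩ := intermediate_value_Icc' hcd hg.continuousOn h0
  exact hno t ht hgt

lemma sign_const' {g : ℝ → ℝ} (hg : Continuous g) {c d : ℝ} (hcd : c ≤ d)
    (hno : ∀ t ∈ Set.Icc c d, g t ≠ 0) (hd : 0 < g d) : 0 < g c := by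
  by_contra hc
  push_neg at hc
  have hc' : g c < 0 := lt_of_le_of_ne hc (hno c (by constructor <;> simp [hcd, le_refl]))
  have h0 : (0:ℝ) ∈ Set.Icc (g c) (g d) := ⟨le_of_lt hc', le_of_lt hd⟩
  obtain ⟨t, ht, hgt⟩ := intermediate_value_Icc hcd hg.continuousOn h0
  exact hno t ht hgt

lemma slope_pos_right {g : ℝ → ℝ} {m x y : ℝ} (h : HasDerivAt g m x) (hg0 : g x = 0)
    (hm : 0 < m) (hxy : x < y) : ∃ t, x < t ∧ t < y ∧ 0 < g t := by
  have hs := hasDerivAt_iff_tendsto_slope.mp h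
  have hev : ∀ᶠ t in nhdsWithin x {x}ᶜ, 0 < slope g x t :=
    hs.eventually (eventually_gt_nhds hm)
  have hle : nhdsWithin x (Set.Ioi x) ≤ nhdsWithin x {x}ᶜ :=
    nhdsWithin_mono x (fun t ht => ne_of_gt ht)
  have hev2 : ∀ᶠ t in nhdsWithin x (Set.Ioi x), 0 < slope g x t := hev.filter_mono hle
  have hmem : Set.Ioo x y ∈ nhdsWithin x (Set.Ioi x) := Ioo_mem_nhdsGT_of_mem ⟨le_refl x, hxy⟩
  obtain ⟨t, hslope, htIoo⟩ := (hev2.and (Filter.eventually_mem_set.mpr hmem)).exists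
  refine ⟨t, htIoo.1, htIoo.2, ?_⟩
  have heq : slope g x t = g t / (t - x) := by
    rw [slope_def_field, hg0]; simp
  rw [heq] at hslope
  have htx : 0 < t - x := by linarith [htIoo.1]
  by_contra hgt
  push_neg at hgt
  nlinarith [div_nonpos_of_nonpos_of_nonneg hgt (le_of_lt htx)]

lemma slope_neg_left {g : ℝ → ℝ} {m x w : ℝ} (h : HasDerivAt g m x) (hg0 : g x = 0)
    (hm : 0 < m) (hwx : w < x) : ∃ t, w < t ∧ t < x ∧ g t < 0 := by
  have hs := hasDerivAt_iff_tendsto_slope.mp h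
  have hev : ∀ᶠ t in nhdsWithin x {x}ᶜ, 0 < slope g x t :=
    hs.eventually (eventually_gt_nhds hm)
  have hle : nhdsWithin x (Set.Iio x) ≤ nhdsWithin x {x}ᶜ :=
    nhdsWithin_mono x (fun t ht => ne_of_lt ht)
  have hev2 : ∀ᶠ t in nhdsWithin x (Set.Iio x), 0 < slope g x t := hev.filter_mono hle
  have hmem : Set.Ioo w x ∈ nhdsWithin x (Set.Iio x) := Ioo_mem_nhdsLT_of_mem ⟨hwx, le_refl x⟩
  obtain ⟨t, hslope, htIoo⟩ := (hev2.and (Filter.eventually_mem_set.mpr hmem)).exists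
  refine ⟨t, htIoo.1, htIoo.2, ?_⟩
  have heq : slope g x t = g t / (t - x) := by
    rw [slope_def_field, hg0]; simp
  rw [heq] at hslope
  have htx : t - x < 0 := by linarith [htIoo.2]
  by_contra hgt
  push_neg at hgt
  nlinarith [div_nonpos_of_nonneg_of_nonpos hgt (le_of_lt htx)]

end realhelpers

section reconstruct

lemma deriv_ne_at_simple_root (p r : Polynomial ℂ) (w : ℂ) (h : p = (X - C w) * r)
    (hr : r.eval w ≠ 0) : (derivative p).eval w ≠ 0 := by
  rw [h, derivative_mul]
  simp only [derivative_sub, derivative_X, derivative_C, sub_zero, one_mul, eval_add, eval_mul,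
    eval_sub, eval_X, eval_C, sub_self, zero_mul, add_zero]
  simpa using hr

lemma recon (p : Polynomial ℂ) (n : ℕ) (c : ℂ) (z : ℕ → ℂ) (hdeg : p.natDegree = n)
    (hlc : p.leadingCoeff = c) (hc : c ≠ 0)
    (hz : ∀ i < n, p.eval (z i) = 0)
    (hdist : ∀ i < n, ∀ l < n, z i = z l → i = l) :
    p = C c * ∏ i ∈ Finset.range n, (X - C (z i)) := by
  have hpne : p ≠ 0 := fun h => hc (by rw [← hlc, h, leadingCoeff_zero])
  have hdvd : (∏ i ∈ Finset.range n, (X - C (z i))) ∣ p := by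
    apply Finset.prod_dvd_of_coprime
    · intro i hi l hl hil
      simp only [Finset.mem_coe, Finset.mem_range] at hi hl
      refine Polynomial.isCoprime_X_sub_C_of_isUnit_sub ?_
      refine (sub_ne_zero.mpr ?_).isUnit
      exact fun h => hil (hdist i hi l hl h)
    · intro i hi
      rw [Finset.mem_range] at hi
      exact dvd_iff_isRoot.mpr (hz i hi)
  obtain ⟨q, hq⟩ := hdvd
  have hmonic : (∏ i ∈ Finset.range n, (X - C (z i))).Monic :=
    monic_prod_of_monic _ _ (fun i _ => monic_X_sub_C (z i))
  have hprodne : (∏ i ∈ Finset.range n, (X - C (z i))) ≠ 0 := hmonic.ne_zero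
  have hqne : q ≠ 0 := fun h => hpne (by rw [hq, h, mul_zero])
  have hdegprod : (∏ i ∈ Finset.range n, (X - C (z i))).natDegree = n := by
    rw [natDegree_prod_of_monic _ _ (fun i _ => monic_X_sub_C (z i))]
    simp
  have hdq : q.natDegree = 0 := by
    have h2 := natDegree_mul hprodne hqne
    rw [← hq, hdeg, hdegprod] at h2
    omega
  have hqC : q = C (q.coeff 0) := eq_C_of_natDegree_eq_zero hdq
  have hlcq : q.coeff 0 = c := by
    have h2 := congrArg leadingCoeff hq
    rw [leadingCoeff_mul, hmonic.leadingCoeff, one_mul, hlc] at h2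
    rw [h2]
    unfold Polynomial.leadingCoeff
    rw [hdq]
  rw [hq, hqC, hlcq, mul_comm]

lemma exp_I_inj {s t : ℝ} (hs0 : 0 ≤ s) (hs : s < 2*Real.pi) (ht0 : 0 ≤ t) (ht : t < 2*Real.pi)
    (h : Complex.exp ((s:ℂ)*I) = Complex.exp ((t:ℂ)*I)) : s = t := by
  rw [Complex.exp_eq_exp_iff_exists_int] at h
  obtain ⟨n, hn⟩ := h
  have hs' : s = t + n * (2*Real.pi) := by
    have h2 := congrArg Complex.im hn
    have h3 : ((s:ℂ)*I).im = s := by simp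
    have h4 : ((t:ℂ)*I + n*(2*Real.pi*I)).im = t + n*(2*Real.pi) := by
      simp [Complex.add_im, Complex.mul_im]
    rw [h3, h4] at h2
    exact h2
  have hπ := Real.pi_pos
  have hn0 : n = 0 := by
    rcases lt_trichotomy n 0 with h' | h' | h'
    · exfalso
      have h5 : (n:ℝ) ≤ -1 := by
        have h6 : n ≤ -1 := by omega
        exact_mod_cast h6
      nlinarith
    · exact h'
    · exfalso
      have h5 : (1:ℝ) ≤ (n:ℝ) := by exact_mod_cast h'
      nlinarith
  rw [hn0] at hs'
  simpa using hs'

end reconstruct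

section mainind

def Hyp (a b : ℝ) (j : ℕ) : Prop :=
  ∃ θ : ℕ → ℝ,
    (∀ i l, i < l → l < j → θ i < θ l) ∧
    (∀ i, i < j → 0 < θ i ∧ θ i < 2*Real.pi) ∧
    qpoly a b j = C (qcoef a b j j) *
      ∏ i ∈ Finset.range j, (X - C (Complex.exp ((θ i : ℝ) * I)))

lemma hyp_zero (a b : ℝ) : Hyp a b 0 := by
  refine ⟨fun _ => 0, by omega, by omega, ?_⟩
  simp [qpoly, qcoef, pochC]

lemma hyp_step (a b : ℝ) (ha : 0 < a) (j : ℕ) (H : Hyp a b j) : Hyp a b (j+1) := by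
  obtain ⟨θ, hmono, hrange, hfact⟩ := H
  have hπ : 0 < Real.pi := Real.pi_pos
  set τ : ℕ → ℝ := fun i => if i = 0 then 0 else if i ≤ j then θ (i-1) else 2*Real.pi with hτ
  have hτ0 : τ 0 = 0 := by simp [hτ]
  have hτlast : τ (j+1) = 2*Real.pi := by
    have h1 : ¬(j+1 ≤ j) := by omega
    simp [hτ, h1]
  have hτmid : ∀ i, 1 ≤ i → i ≤ j → τ i = θ (i-1) := by
    intro i h1 h2
    rw [hτ]
    simp only
    rw [if_neg (by omega), if_pos h2]
  have hτmono : ∀ i l, i < l → l ≤ j+1 → τ i < τ l := by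
    intro i l hil hl
    by_cases hl' : l ≤ j
    · have hτl : τ l = θ (l-1) := hτmid l (by omega) hl'
      by_cases hi : i = 0
      · rw [hi, hτ0, hτl]; exact (hrange (l-1) (by omega)).1
      · rw [hτmid i (by omega) (by omega), hτl]
        exact hmono (i-1) (l-1) (by omega) (by omega)
    · have hl2 : l = j+1 := by omega
      rw [hl2, hτlast]
      by_cases hi : i = 0
      · rw [hi, hτ0]; positivity
      · rw [hτmid i (by omega) (by omega)]
        exact (hrange (i-1) (by omega)).2
  have hτle : ∀ i l, i ≤ l → l ≤ j+1 → τ i ≤ τ l := by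
    intro i l h1 h2
    rcases eq_or_lt_of_le h1 with rfl | h
    · exact le_refl _
    · exact le_of_lt (hτmono _ _ h h2)
  have hτmem : ∀ i, i ≤ j+1 → 0 ≤ τ i ∧ τ i ≤ 2*Real.pi := by
    intro i hi
    constructor
    · rw [← hτ0]; exact hτle 0 i (by omega) hi
    · rw [← hτlast]; exact hτle i (j+1) hi (le_refl _)
  have hpr : ∀ m : ℕ, 0 < (ascPochhammer ℝ m).eval (2*a) :=
    fun m => ascPochhammer_pos m (2*a) (by linarith)
  have hlcne : qcoef a b j j ≠ 0 := qcoef_diag_ne a b ha j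
  -- zero characterization
  have hroot : ∀ t : ℝ, 0 ≤ t → t ≤ 2*Real.pi → (gf a b j t = 0 ↔ ∃ m, m < j ∧ t = θ m) := by
    intro t ht0 ht2
    rw [gf_eq_zero_iff, hfact]
    simp only [eval_mul, eval_C, eval_prod, eval_sub, eval_X]
    rw [mul_eq_zero]
    constructor
    · rintro (h | h)
      · exact absurd h hlcne
      · rw [Finset.prod_eq_zero_iff] at h
        obtain ⟨m, hm, hzero⟩ := h
        rw [Finset.mem_range] at hm
        have hexp : Complex.exp ((t:ℂ)*I) = Complex.exp ((θ m:ℂ)*I) := by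
          have := sub_eq_zero.mp hzero
          exact this
        have htlt : t < 2*Real.pi := by
          rcases lt_or_eq_of_le ht2 with h' | h'
          · exact h'
          · exfalso
            have h1 : Complex.exp ((t:ℂ)*I) = Complex.exp (((0:ℝ):ℂ)*I) := by
              rw [h']
              push_cast
              rw [show ((2:ℂ)*Real.pi) * I = 2*Real.pi*I by ring, Complex.exp_two_pi_mul_I]
              simp
            rw [h1] at hexp
            have h2 : (0:ℝ) = θ m :=
              exp_I_inj (by norm_num) (by positivity) (hrange m hm).1.le (hrange m hm).2 hexp
            exact absurd h2.symm (ne_of_gt (hrange m hm).1)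
        exact ⟨m, hm, exp_I_inj ht0 htlt (hrange m hm).1.le (hrange m hm).2 hexp⟩
    · rintro ⟨m, hm, rfl⟩
      right
      apply Finset.prod_eq_zero (Finset.mem_range.mpr hm)
      simp
  -- no zeros between consecutive τ's
  have hnz : ∀ i, i ≤ j → ∀ t, τ i < t → t < τ (i+1) → gf a b j t ≠ 0 := by
    intro i hi t h1 h2 hzero
    have ht0 : 0 ≤ t := le_trans (hτmem i (by omega)).1 (le_of_lt h1)
    have ht2 : t ≤ 2*Real.pi := le_trans (le_of_lt h2) (hτmem (i+1) (by omega)).2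
    obtain ⟨m, hm, rfl⟩ := (hroot t ht0 ht2).mp hzero
    have hτm : τ (m+1) = θ m := hτmid (m+1) (by omega) (by omega)
    rcases le_or_gt (m+1) i with hle | hlt
    · have := hτle (m+1) i hle (by omega)
      rw [hτm] at this
      linarith
    · have := hτle (i+1) (m+1) hlt (by omega)
      rw [hτm] at this
      linarith
  -- gf j vanishes at interior τ's
  have hgroot : ∀ i, 1 ≤ i → i ≤ j → gf a b j (τ i) = 0 := by
    intro i h1 h2
    rw [hroot (τ i) (hτmem i (by omega)).1 (hτmem i (by omega)).2]
    exact ⟨i-1, by omega, (hτmid i h1 h2)⟩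
  -- derivative nonzero at interior τ's
  have hdfne : ∀ i, 1 ≤ i → i ≤ j → df a b j (τ i) ≠ 0 := by
    intro i h1 h2 h0
    have hθmem : i - 1 < j := by omega
    have hw : Complex.exp ((τ i : ℂ) * I) = Complex.exp ((θ (i-1):ℂ)*I) := by
      rw [hτmid i h1 h2]
    have heval0 : (qpoly a b j).eval (Complex.exp ((τ i:ℝ) * I)) = 0 :=
      (gf_eq_zero_iff a b j (τ i)).mp (hgroot i h1 h2)
    have hder0 := (df_at_root a b j (τ i) heval0).mp h0
    have hfact2 : qpoly a b j = (X - C (Complex.exp ((τ i:ℝ) * I))) *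
        (C (qcoef a b j j) * ∏ m ∈ (Finset.range j).erase (i-1), (X - C (Complex.exp ((θ m : ℝ) * I)))) := by
      rw [hfact, ← Finset.mul_prod_erase (Finset.range j)
        (fun m => (X - C (Complex.exp ((θ m : ℝ) * I)))) (Finset.mem_range.mpr hθmem)]
      rw [show ((τ i : ℝ):ℂ) = ((τ i : ℂ)) by norm_cast, hw]
      ring
    apply deriv_ne_at_simple_root (qpoly a b j) _ _ hfact2 ?_ hder0
    -- r.eval w ≠ 0
    simp only [eval_mul, eval_C, eval_prod, eval_sub, eval_X]
    apply mul_ne_zero hlcne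
    rw [Finset.prod_ne_zero_iff]
    intro m hm
    rw [Finset.mem_erase, Finset.mem_range] at hm
    rw [show ((τ i : ℝ):ℂ) = ((τ i : ℂ)) by norm_cast, hw]
    intro hzero
    have heq : Complex.exp ((θ (i-1):ℂ)*I) = Complex.exp ((θ m:ℂ)*I) := sub_eq_zero.mp hzero
    have := exp_I_inj (hrange (i-1) hθmem).1.le (hrange (i-1) hθmem).2
      (hrange m hm.2).1.le (hrange m hm.2).2 heq
    -- θ (i-1) = θ m with i-1 ≠ m contradicts strict monotonicity
    rcases lt_trichotomy (i-1) m with h' | h' | h'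
    · have := hmono (i-1) m h' hm.2
      linarith
    · exact hm.1 h'.symm
    · have := hmono m (i-1) h' hθmem
      linarith
  -- main sign claim
  have main : ∀ i, i ≤ j → (∀ t, τ i < t → t < τ (i+1) → 0 < (-1:ℝ)^i * gf a b j t) := by
    intro i
    induction i with
    | zero =>
      intro _ t h1 h2
      simp only [pow_zero, one_mul]
      have h0 : (0:ℝ) < gf a b j 0 := by rw [gf_zero_val]; exact hpr j
      rw [hτ0] at h1
      refine sign_const (continuous_gf a b j) (le_of_lt h1) ?_ h0
      intro s hs
      rcases eq_or_lt_of_le hs.1 with rfl | hs1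
      · exact ne_of_gt h0
      · exact hnz 0 (by omega) s (by rw [hτ0]; exact hs1) (lt_of_le_of_lt hs.2 h2)
    | succ i ih =>
      intro hij t h1 h2
      have hi' : i ≤ j := by omega
      have hroot1 : gf a b j (τ (i+1)) = 0 := hgroot (i+1) (by omega) hij
      have hmne : df a b j (τ (i+1)) ≠ 0 := hdfne (i+1) (by omega) hij
      have hprev := ih hi'
      have hm_sign : 0 < (-1:ℝ)^(i+1) * df a b j (τ (i+1)) := by
        rcases (mul_ne_zero (pow_ne_zero (i+1) (by norm_num : (-1:ℝ) ≠ 0)) hmne).lt_or_gt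
          with hneg | hpos
        · exfalso
          have hφd : HasDerivAt (fun s => (-1:ℝ)^i * gf a b j s)
              ((-1:ℝ)^i * df a b j (τ (i+1))) (τ (i+1)) :=
            (hasDerivAt_gf a b j (τ (i+1))).const_mul _
          have hφpos : 0 < (-1:ℝ)^i * df a b j (τ (i+1)) := by
            have he : (-1:ℝ)^(i+1) = -(-1:ℝ)^i := by ring
            rw [he] at hneg
            linarith
          obtain ⟨s, hs1, hs2, hs3⟩ := slope_neg_left hφd (by simp [hroot1]) hφpos
            (hτmono i (i+1) (by omega) (by omega))
          exact absurd (hprev s hs1 hs2) (by linarith)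
        · exact hpos
      have hψd : HasDerivAt (fun s => (-1:ℝ)^(i+1) * gf a b j s)
          ((-1:ℝ)^(i+1) * df a b j (τ (i+1))) (τ (i+1)) :=
        (hasDerivAt_gf a b j (τ (i+1))).const_mul _
      obtain ⟨t0, ht01, ht02, ht03⟩ := slope_pos_right hψd (by simp [hroot1]) hm_sign
        (hτmono (i+1) (i+2) (by omega) (by omega))
      have hψcont : Continuous (fun s => (-1:ℝ)^(i+1) * gf a b j s) :=
        continuous_const.mul (continuous_gf a b j)
      have hψnz : ∀ s, τ (i+1) < s → s < τ (i+2) → (-1:ℝ)^(i+1) * gf a b j s ≠ 0 :=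
        fun s u1 u2 => mul_ne_zero (pow_ne_zero _ (by norm_num)) (hnz (i+1) hij s u1 u2)
      rcases le_total t0 t with hc | hc
      · exact sign_const hψcont hc
          (fun s hs => hψnz s (lt_of_lt_of_le ht01 hs.1) (lt_of_le_of_lt hs.2 h2)) ht03
      · exact sign_const' hψcont hc
          (fun s hs => hψnz s (lt_of_lt_of_le h1 hs.1) (lt_of_le_of_lt hs.2 ht02)) ht03
  -- derivative signs (restated)
  have hder : ∀ i, 1 ≤ i → i ≤ j → 0 < (-1:ℝ)^i * df a b j (τ i) := by
    intro i h1 h2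
    obtain ⟨i, rfl⟩ : ∃ i', i = i' + 1 := ⟨i - 1, by omega⟩
    have hroot1 : gf a b j (τ (i+1)) = 0 := hgroot (i+1) (by omega) h2
    have hmne : df a b j (τ (i+1)) ≠ 0 := hdfne (i+1) (by omega) h2
    have hprev := main i (by omega)
    rcases (mul_ne_zero (pow_ne_zero (i+1) (by norm_num : (-1:ℝ) ≠ 0)) hmne).lt_or_gt
      with hneg | hpos
    · exfalso
      have hφd : HasDerivAt (fun s => (-1:ℝ)^i * gf a b j s)
          ((-1:ℝ)^i * df a b j (τ (i+1))) (τ (i+1)) :=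
        (hasDerivAt_gf a b j (τ (i+1))).const_mul _
      have hφpos : 0 < (-1:ℝ)^i * df a b j (τ (i+1)) := by
        have he : (-1:ℝ)^(i+1) = -(-1:ℝ)^i := by ring
        rw [he] at hneg
        linarith
      obtain ⟨s, hs1, hs2, hs3⟩ := slope_neg_left hφd (by simp [hroot1]) hφpos
        (hτmono i (i+1) (by omega) (by omega))
      exact absurd (hprev s hs1 hs2) (by linarith)
    · exact hpos
  -- values of gf (j+1) at the τ's
  have hvals : ∀ i, i ≤ j+1 → 0 < (-1:ℝ)^i * gf a b (j+1) (τ i) := by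
    intro i hi
    rcases Nat.eq_zero_or_pos i with rfl | hip
    · rw [hτ0]
      simp only [pow_zero, one_mul]
      rw [gf_zero_val]
      exact hpr (j+1)
    rcases eq_or_lt_of_le hi with rfl | hlt
    · rw [hτlast, gf_two_pi_val]
      have he : ((-1:ℝ)^(j+1)) * ((-1:ℝ)^(j+1) * (ascPochhammer ℝ (j+1)).eval (2*a))
          = (ascPochhammer ℝ (j+1)).eval (2*a) := by
        rw [← mul_assoc, ← pow_add]
        rw [Even.neg_one_pow ⟨j+1, by ring⟩, one_mul]
      rw [he]
      exact hpr (j+1)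
    · have hij : i ≤ j := by omega
      rw [gf_rec, hgroot i (by omega) hij, mul_zero, zero_add]
      have hτpos : 0 < τ i := by rw [← hτ0]; exact hτmono 0 i (by omega) (by omega)
      have hτlt : τ i < 2*Real.pi := by rw [← hτlast]; exact hτmono i (j+1) (by omega) (by omega)
      have hsin : 0 < Real.sin (τ i / 2) :=
        Real.sin_pos_of_pos_of_lt_pi (by linarith) (by linarith)
      have hd := hder i (by omega) hij
      calc (0:ℝ) < 2 * Real.sin (τ i / 2) * ((-1:ℝ)^i * df a b j (τ i)) := by positivity
        _ = (-1:ℝ)^i * (2 * Real.sin (τ i / 2) * df a b j (τ i)) := by ring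
  -- IVT: zeros of gf (j+1)
  have hIVT : ∀ i, i ≤ j → ∃ e, τ i < e ∧ e < τ (i+1) ∧ gf a b (j+1) e = 0 := by
    intro i hi
    have hfc : ContinuousOn (fun t => (-1:ℝ)^i * gf a b (j+1) t) (Set.Icc (τ i) (τ (i+1))) :=
      (continuous_const.mul (continuous_gf a b (j+1))).continuousOn
    have hfa : 0 < (-1:ℝ)^i * gf a b (j+1) (τ i) := hvals i (by omega)
    have hfb : (-1:ℝ)^i * gf a b (j+1) (τ (i+1)) < 0 := by
      have := hvals (i+1) (by omega)
      have he : (-1:ℝ)^(i+1) = -(-1:ℝ)^i := by ring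
      rw [he] at this
      linarith
    obtain ⟨e, he, hfe⟩ := intermediate_value_Ioo'
      (le_of_lt (hτmono i (i+1) (by omega) (by omega))) hfc
      (Set.mem_Ioo.mpr ⟨hfb, hfa⟩)
    refine ⟨e, he.1, he.2, ?_⟩
    rcases mul_eq_zero.mp hfe with h' | h'
    · exact absurd h' (pow_ne_zero _ (by norm_num))
    · exact h'
  have hIVT' : ∀ i : ℕ, ∃ e : ℝ, i ≤ j → (τ i < e ∧ e < τ (i+1) ∧ gf a b (j+1) e = 0) := by
    intro i
    by_cases hi : i ≤ j
    · obtain ⟨e, h1, h2, h3⟩ := hIVT i hi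
      exact ⟨e, fun _ => ⟨h1, h2, h3⟩⟩
    · exact ⟨0, fun h => absurd h hi⟩
  choose η hη using hIVT'
  have hηmono : ∀ i l, i < l → l < j+1 → η i < η l := by
    intro i l h1 h2
    have hi : i ≤ j := by omega
    have hl : l ≤ j := by omega
    obtain ⟨a1, a2, _⟩ := hη i hi
    obtain ⟨b1, b2, _⟩ := hη l hl
    have := hτle (i+1) l (by omega) (by omega)
    linarith
  have hηrange : ∀ i, i < j+1 → 0 < η i ∧ η i < 2*Real.pi := by
    intro i hi
    have hi' : i ≤ j := by omega
    obtain ⟨a1, a2, _⟩ := hη i hi'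
    constructor
    · exact lt_of_le_of_lt (hτmem i (by omega)).1 a1
    · exact lt_of_lt_of_le a2 (hτmem (i+1) (by omega)).2
  refine ⟨η, hηmono, hηrange, ?_⟩
  apply recon (qpoly a b (j+1)) (j+1) (qcoef a b (j+1) (j+1))
    (fun i => Complex.exp ((η i : ℝ) * I)) (natDegree_qpoly a b ha (j+1))
    (leadingCoeff_qpoly a b ha (j+1)) (qcoef_diag_ne a b ha (j+1))
  · intro i hi
    have hi' : i ≤ j := by omega
    obtain ⟨_, _, h3⟩ := hη i hi'
    exact (gf_eq_zero_iff a b (j+1) (η i)).mp h3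
  · intro i hi l hl heq
    by_contra hne
    rcases Nat.lt_or_ge i l with h' | h'
    · have := hηmono i l h' hl
      have heq2 := exp_I_inj (hηrange i hi).1.le (hηrange i hi).2
        (hηrange l hl).1.le (hηrange l hl).2 heq
      linarith
    · have h'' : l < i := by omega
      have := hηmono l i h'' hi
      have heq2 := exp_I_inj (hηrange i hi).1.le (hηrange i hi).2
        (hηrange l hl).1.le (hηrange l hl).2 heq
      linarith

end mainind

/-- For `a > 0`, `r̃_{n+1}(1) = (2a)_{n+1} ≠ 0` and `r̃_{n+1}` has exactly
`n+1` zeros, all simple, all on the unit circle. -/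
theorem stmt_14 (a b : ℝ) (ha : 0 < a) (n : ℕ) :
    (rpoly a b (n + 1)).eval 1 = pochC (2 * (a : ℂ)) (n + 1) ∧
    pochC (2 * (a : ℂ)) (n + 1) ≠ 0 ∧
    Multiset.card (rpoly a b (n + 1)).roots = n + 1 ∧
    (rpoly a b (n + 1)).roots.Nodup ∧
    (∀ z ∈ (rpoly a b (n + 1)).roots, ‖z‖ = 1) := by
  have H : Hyp a b (n+1) := by
    induction (n+1) with
    | zero => exact hyp_zero a b
    | succ k ih => exact hyp_step a b ha k ih
  obtain ⟨θ, hmono, hrange, hfact⟩ := H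
  have hqr := rpoly_eq_qpoly a b (n+1)
  have hlcne : qcoef a b (n+1) (n+1) ≠ 0 := qcoef_diag_ne a b ha (n+1)
  -- injectivity of the root map
  have hinj : ∀ i < n+1, ∀ l < n+1,
      Complex.exp ((θ i : ℝ) * I) = Complex.exp ((θ l : ℝ) * I) → i = l := by
    intro i hi l hl heq
    by_contra hne
    have heq2 := exp_I_inj (hrange i hi).1.le (hrange i hi).2
      (hrange l hl).1.le (hrange l hl).2 heq
    rcases Nat.lt_or_ge i l with h' | h'
    · have := hmono i l h' hl; linarith
    · have h'' : l < i := by omega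
      have := hmono l i h'' hi; linarith
  -- roots computation
  have hprod : (∏ i ∈ Finset.range (n+1), (X - C (Complex.exp ((θ i : ℝ) * I))))
      = (Multiset.map (fun w => X - C w)
          ((Finset.range (n+1)).val.map (fun i => Complex.exp ((θ i : ℝ) * I)))).prod := by
    rw [Multiset.map_map]
    rfl
  have hroots : (rpoly a b (n+1)).roots
      = (Finset.range (n+1)).val.map (fun i => Complex.exp ((θ i : ℝ) * I)) := by
    rw [hqr, hfact, Polynomial.roots_C_mul _ hlcne, hprod,
      Polynomial.roots_multiset_prod_X_sub_C]
  refine ⟨rpoly_eval_one a b (n+1), ?_, ?_, ?_, ?_⟩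
  · rw [pochC_real]
    exact Complex.ofReal_ne_zero.mpr (ne_of_gt (ascPochhammer_pos (n+1) (2*a) (by linarith)))
  · rw [hroots]
    simp
  · rw [hroots]
    refine Multiset.Nodup.map_on ?_ (Finset.range (n+1)).nodup
    intro i hi l hl heq
    rw [Finset.mem_val, Finset.mem_range] at hi hl
    exact hinj i hi l hl heq
  · intro z hz
    rw [hroots, Multiset.mem_map] at hz
    obtain ⟨i, hi, rfl⟩ := hz
    exact Complex.norm_exp_ofReal_mul_I (θ i)
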